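/- Let Ω ⊂ ℝ^d be a bounded open set, let A : Ω → (d×d symmetric matrices) be measurable and uniformly elliptic with constant β > 0, i.e. ξᵀA(x)ξ ≥ β|ξ|² for all ξ ∈ ℝ^d and almost every x ∈ Ω, and let c : Ω → ℝ be measurable and essentially bounded below with γ := ess inf_{x∈Ω} c(x) (possibly negative). Then for every constant G ≥ β − γ and every continuously differentiable function u on Ω with u and its gradient ∇u square-integrable over Ω, one has ∫_Ω ∇u(x)·A(x)∇u(x) dx + ∫_Ω c(x) u(x)² dx ≥ β ( ∫_Ω |∇u(x)|² dx + ∫_Ω u(x)² dx ) − G ∫_Ω u(x)² dx. -/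

import Mathlib

open MeasureTheory Matrix

/-- The vector of partial derivatives (the gradient) of `f : ℝ^d → ℝ`. -/
noncomputable def pgrad {d : ℕ} (f : (Fin d → ℝ) → ℝ) (x : Fin d → ℝ) : Fin d → ℝ :=
  fun i => fderiv ℝ f x (Pi.single i 1)

/-- Gårding's inequality.  For a bounded open `Ω ⊆ ℝ^d`, a measurable,
symmetric, uniformly elliptic (constant `β > 0`) coefficient matrix `A`, a measurable
coefficient `c` essentially bounded below with essential infimum `γ`, every `G ≥ β − γ`
and every `C¹` function `u` on `Ω` with `u` and `∇u` square-integrable over `Ω`: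
`∫_Ω ∇u·A∇u + ∫_Ω c u² ≥ β (∫_Ω |∇u|² + ∫_Ω u²) − G ∫_Ω u²`. -/
theorem garding_inequality
    {d : ℕ} (Ω : Set (Fin d → ℝ)) (hΩopen : IsOpen Ω) (hΩbdd : Bornology.IsBounded Ω)
    (A : (Fin d → ℝ) → Matrix (Fin d) (Fin d) ℝ) (hAmeas : ∀ i j : Fin d, Measurable fun x => A x i j)
    (hAsymm : ∀ x ∈ Ω, (A x).IsSymm)
    (β : ℝ) (hβ : 0 < β)
    (helliptic : ∀ ξ : Fin d → ℝ,
      ∀ᵐ x ∂(volume.restrict Ω), β * (ξ ⬝ᵥ ξ) ≤ ξ ⬝ᵥ (A x).mulVec ξ)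
    (c : (Fin d → ℝ) → ℝ) (hcmeas : Measurable c)
    (γ : ℝ) (hγ : γ = essInf c (volume.restrict Ω))
    (hcbelow : ∀ᵐ x ∂(volume.restrict Ω), γ ≤ c x)
    (G : ℝ) (hG : β - γ ≤ G)
    (u : (Fin d → ℝ) → ℝ) (hu : ContDiffOn ℝ 1 u Ω)
    (huL2 : MemLp u 2 (volume.restrict Ω))
    (hgradL2 : MemLp (fun x => pgrad u x) 2 (volume.restrict Ω))
    (hint1 : Integrable (fun x => pgrad u x ⬝ᵥ (A x).mulVec (pgrad u x)) (volume.restrict Ω))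
    (hint2 : Integrable (fun x => c x * u x ^ 2) (volume.restrict Ω)) :
    (∫ x in Ω, pgrad u x ⬝ᵥ (A x).mulVec (pgrad u x)) + ∫ x in Ω, c x * u x ^ 2 ≥
      β * ((∫ x in Ω, pgrad u x ⬝ᵥ pgrad u x) + ∫ x in Ω, u x ^ 2)
        - G * ∫ x in Ω, u x ^ 2 := by
  -- Notation
  set μ := volume.restrict Ω with hμ
  set g := fun x => pgrad u x with hg
  -- a.e. pointwise ellipticity for all ξ simultaneously
  have hell : ∀ᵐ x ∂μ, ∀ ξ : Fin d → ℝ, β * (ξ ⬝ᵥ ξ) ≤ ξ ⬝ᵥ (A x).mulVec ξ := by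
    obtain ⟨S, hSc, hSd⟩ := TopologicalSpace.exists_countable_dense (Fin d → ℝ)
    have h := (ae_ball_iff hSc).mpr (fun ξ _ => helliptic ξ)
    filter_upwards [h] with x hx ξ
    have hcl : IsClosed {ξ : Fin d → ℝ | β * (ξ ⬝ᵥ ξ) ≤ ξ ⬝ᵥ (A x).mulVec ξ} := by
      apply isClosed_le
      · exact continuous_const.mul (continuous_id.dotProduct continuous_id)
      · exact continuous_id.dotProduct
          ((continuous_const : Continuous fun _ : Fin d → ℝ => A x).matrix_mulVec continuous_id)
    have hsub : S ⊆ {ξ : Fin d → ℝ | β * (ξ ⬝ᵥ ξ) ≤ ξ ⬝ᵥ (A x).mulVec ξ} :=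
      fun ξ hξ => hx ξ hξ
    exact (hcl.closure_subset_iff.mpr hsub) (hSd ξ)
  -- integrability of |∇u|²
  have hgg_int : Integrable (fun x => g x ⬝ᵥ g x) μ := by
    have : (fun x => g x ⬝ᵥ g x) = fun x => ∑ i, g x i ^ 2 := by
      funext x; simp [dotProduct, sq]
    rw [this]
    apply integrable_finset_sum
    intro i _
    have hi : MemLp (fun x => g x i) 2 μ :=
      (ContinuousLinearMap.proj i : ((Fin d → ℝ) →L[ℝ] ℝ)).comp_memLp' hgradL2
    exact hi.integrable_sq
  have hu2_int : Integrable (fun x => u x ^ 2) μ := huL2.integrable_sq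
  -- measurability of g ⬝ᵥ A g
  -- ∫ g ⬝ A g ≥ β ∫ g ⬝ g
  have I1 : β * ∫ x in Ω, g x ⬝ᵥ g x ≤ ∫ x in Ω, g x ⬝ᵥ (A x).mulVec (g x) := by
    rw [← integral_const_mul]
    apply integral_mono_ae (hgg_int.const_mul β) hint1
    filter_upwards [hell] with x hx
    exact hx (g x)
  -- ∫ c u² ≥ γ ∫ u²
  have I2 : γ * ∫ x in Ω, u x ^ 2 ≤ ∫ x in Ω, c x * u x ^ 2 := by
    rw [← integral_const_mul]
    apply integral_mono_ae (hu2_int.const_mul γ) hint2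
    filter_upwards [hcbelow] with x hx
    exact mul_le_mul_of_nonneg_right hx (sq_nonneg _)
  have hQ : 0 ≤ ∫ x in Ω, u x ^ 2 := integral_nonneg fun x => sq_nonneg _
  have key : (β - G) * ∫ x in Ω, u x ^ 2 ≤ γ * ∫ x in Ω, u x ^ 2 :=
    mul_le_mul_of_nonneg_right (by linarith) hQ
  have : β * ((∫ x in Ω, g x ⬝ᵥ g x) + ∫ x in Ω, u x ^ 2) - G * ∫ x in Ω, u x ^ 2
      = β * (∫ x in Ω, g x ⬝ᵥ g x) + (β - G) * ∫ x in Ω, u x ^ 2 := by ring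
  rw [ge_iff_le, this]
  calc β * (∫ x in Ω, g x ⬝ᵥ g x) + (β - G) * ∫ x in Ω, u x ^ 2
      ≤ (∫ x in Ω, g x ⬝ᵥ (A x).mulVec (g x)) + γ * ∫ x in Ω, u x ^ 2 :=
        add_le_add I1 key
    _ ≤ _ := add_le_add_right I2 _
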